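/- Let n ≥ 2, let k be a commutative ring, G a group, φ : TVB_n → G a group homomorphism, and a, b, c ∈ k. Then there exists a monoid homomorphism Φ : STVB_n → k[G] into the multiplicative monoid of the monoid algebra k[G] such that Φ(σ_i) = φ(σ_i), Φ(σ̄_i) = φ(σ_i)⁻¹, Φ(ρ_i) = φ(ρ_i), Φ(τ_i) = a·φ(σ_i) + b·φ(σ_i)⁻¹ + c·1 for 1 ≤ i ≤ n−1, and Φ(γ_j) = φ(γ_j) for 1 ≤ j ≤ n (group elements being regarded as elements of k[G] via the canonical embedding). -/

import Mathlib

namespace SingTVB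

/-- Generators of the singular twisted virtual braid monoid `STVB n`
(0-based indexing: `sig i` is the paper's σ_{i+1}, `gam j` is the paper's γ_{j+1}). -/
inductive Gen (n : ℕ) : Type
  | sig : Fin (n - 1) → Gen n
  | sigb : Fin (n - 1) → Gen n
  | rho : Fin (n - 1) → Gen n
  | tau : Fin (n - 1) → Gen n
  | gam : Fin n → Gen n

abbrev FM (n : ℕ) := FreeMonoid (Gen n)

/-- The strand `i` (lower strand of the `i`-th crossing), as an element of `Fin n`. -/
def fa {n : ℕ} (i : Fin (n - 1)) : Fin n := ⟨i.val, by have := i.isLt; omega⟩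
/-- The strand `i+1` (upper strand of the `i`-th crossing), as an element of `Fin n`. -/
def fb {n : ℕ} (i : Fin (n - 1)) : Fin n := ⟨i.val + 1, by have := i.isLt; omega⟩

def Ws {n : ℕ} (i : Fin (n - 1)) : FM n := FreeMonoid.of (Gen.sig i)
def Wsb {n : ℕ} (i : Fin (n - 1)) : FM n := FreeMonoid.of (Gen.sigb i)
def Wr {n : ℕ} (i : Fin (n - 1)) : FM n := FreeMonoid.of (Gen.rho i)
def Wt {n : ℕ} (i : Fin (n - 1)) : FM n := FreeMonoid.of (Gen.tau i)
def Wg {n : ℕ} (j : Fin n) : FM n := FreeMonoid.of (Gen.gam j)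

/-- `|i - j| > 1`. -/
def Far {m : ℕ} (i j : Fin m) : Prop := i.val + 1 < j.val ∨ j.val + 1 < i.val

/-- Defining relations of the singular twisted virtual braid monoid. -/
inductive Rel (n : ℕ) : FM n → FM n → Prop
  | ss {i j : Fin (n - 1)} (h : Far i j) : Rel n (Ws i * Ws j) (Ws j * Ws i)
  | rr {i j : Fin (n - 1)} (h : Far i j) : Rel n (Wr i * Wr j) (Wr j * Wr i)
  | sr {i j : Fin (n - 1)} (h : Far i j) : Rel n (Ws i * Wr j) (Wr j * Ws i)
  | tt {i j : Fin (n - 1)} (h : Far i j) : Rel n (Wt i * Wt j) (Wt j * Wt i)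
  | st {i j : Fin (n - 1)} (h : Far i j) : Rel n (Ws i * Wt j) (Wt j * Ws i)
  | tr {i j : Fin (n - 1)} (h : Far i j) : Rel n (Wt i * Wr j) (Wr j * Wt i)
  | sss {i j : Fin (n - 1)} (h : j.val = i.val + 1) :
      Rel n (Ws i * Ws j * Ws i) (Ws j * Ws i * Ws j)
  | rrr {i j : Fin (n - 1)} (h : j.val = i.val + 1) :
      Rel n (Wr i * Wr j * Wr i) (Wr j * Wr i * Wr j)
  | rsr {i j : Fin (n - 1)} (h : j.val = i.val + 1) :
      Rel n (Wr i * Ws j * Wr i) (Wr j * Ws i * Wr j)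
  | rtr {i j : Fin (n - 1)} (h : j.val = i.val + 1) :
      Rel n (Wr i * Wt j * Wr i) (Wr j * Wt i * Wr j)
  | sst {i j : Fin (n - 1)} (h : j.val = i.val + 1) :
      Rel n (Ws i * Ws j * Wt i) (Wt j * Ws i * Ws j)
  | sst' {i j : Fin (n - 1)} (h : j.val = i.val + 1) :
      Rel n (Ws j * Ws i * Wt j) (Wt i * Ws j * Ws i)
  | rho2 (i : Fin (n - 1)) : Rel n (Wr i * Wr i) 1
  | ssb (i : Fin (n - 1)) : Rel n (Ws i * Wsb i) 1
  | sbs (i : Fin (n - 1)) : Rel n (Wsb i * Ws i) 1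
  | stc (i : Fin (n - 1)) : Rel n (Ws i * Wt i) (Wt i * Ws i)
  | grel (i : Fin (n - 1)) : Rel n (Wg (fb i) * Wr i) (Wr i * Wg (fa i))
  | rsrg (i : Fin (n - 1)) :
      Rel n (Wr i * Ws i * Wr i) (Wg (fb i) * Wg (fa i) * Ws i * Wg (fa i) * Wg (fb i))
  | rtrg (i : Fin (n - 1)) :
      Rel n (Wr i * Wt i * Wr i) (Wg (fb i) * Wg (fa i) * Wt i * Wg (fa i) * Wg (fb i))
  | g2 (j : Fin n) : Rel n (Wg j * Wg j) 1
  | gg (i j : Fin n) : Rel n (Wg i * Wg j) (Wg j * Wg i)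
  | grc {i : Fin (n - 1)} {j : Fin n} (h1 : j ≠ fa i) (h2 : j ≠ fb i) :
      Rel n (Wg j * Wr i) (Wr i * Wg j)
  | sgc {i : Fin (n - 1)} {j : Fin n} (h1 : j ≠ fa i) (h2 : j ≠ fb i) :
      Rel n (Ws i * Wg j) (Wg j * Ws i)
  | tgc {i : Fin (n - 1)} {j : Fin n} (h1 : j ≠ fa i) (h2 : j ≠ fb i) :
      Rel n (Wt i * Wg j) (Wg j * Wt i)

/-- The singular twisted virtual braid monoid on `n` strands. -/
abbrev STVB (n : ℕ) := PresentedMonoid (Rel n)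

def mkS (n : ℕ) : FM n →* STVB n := PresentedMonoid.mk (Rel n)

def sigE (n : ℕ) (i : Fin (n - 1)) : STVB n := mkS n (Ws i)
def sigbE (n : ℕ) (i : Fin (n - 1)) : STVB n := mkS n (Wsb i)
def rhoE (n : ℕ) (i : Fin (n - 1)) : STVB n := mkS n (Wr i)
def tauE (n : ℕ) (i : Fin (n - 1)) : STVB n := mkS n (Wt i)
def gamE (n : ℕ) (j : Fin n) : STVB n := mkS n (Wg j)

/-- The transposition `(i, i+1)` in the symmetric group on `Fin n`. -/
def swp {n : ℕ} (i : Fin (n - 1)) : Equiv.Perm (Fin n) := Equiv.swap (fa i) (fb i)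

end SingTVB
namespace TwVB

/-- Generators of the twisted virtual braid group `TVB n` (0-based indexing). -/
inductive TGen (n : ℕ) : Type
  | sig : Fin (n - 1) → TGen n
  | rho : Fin (n - 1) → TGen n
  | gam : Fin n → TGen n

abbrev FT (n : ℕ) := FreeGroup (TGen n)

def fa {n : ℕ} (i : Fin (n - 1)) : Fin n := ⟨i.val, by have := i.isLt; omega⟩
def fb {n : ℕ} (i : Fin (n - 1)) : Fin n := ⟨i.val + 1, by have := i.isLt; omega⟩

def ws {n : ℕ} (i : Fin (n - 1)) : FT n := FreeGroup.of (TGen.sig i)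
def wr {n : ℕ} (i : Fin (n - 1)) : FT n := FreeGroup.of (TGen.rho i)
def wg {n : ℕ} (j : Fin n) : FT n := FreeGroup.of (TGen.gam j)

/-- `|i - j| > 1`. -/
def Far {m : ℕ} (i j : Fin m) : Prop := i.val + 1 < j.val ∨ j.val + 1 < i.val

/-- Defining relations of the twisted virtual braid group, as pairs of equal words. -/
inductive TRel (n : ℕ) : FT n → FT n → Prop
  | ss {i j : Fin (n - 1)} (h : Far i j) : TRel n (ws i * ws j) (ws j * ws i)
  | rr {i j : Fin (n - 1)} (h : Far i j) : TRel n (wr i * wr j) (wr j * wr i)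
  | sr {i j : Fin (n - 1)} (h : Far i j) : TRel n (ws i * wr j) (wr j * ws i)
  | sss {i j : Fin (n - 1)} (h : j.val = i.val + 1) :
      TRel n (ws i * ws j * ws i) (ws j * ws i * ws j)
  | rrr {i j : Fin (n - 1)} (h : j.val = i.val + 1) :
      TRel n (wr i * wr j * wr i) (wr j * wr i * wr j)
  | rsr {i j : Fin (n - 1)} (h : j.val = i.val + 1) :
      TRel n (wr i * ws j * wr i) (wr j * ws i * wr j)
  | rho2 (i : Fin (n - 1)) : TRel n (wr i * wr i) 1
  | grel (i : Fin (n - 1)) : TRel n (wg (fb i) * wr i) (wr i * wg (fa i))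
  | rsrg (i : Fin (n - 1)) :
      TRel n (wr i * ws i * wr i) (wg (fb i) * wg (fa i) * ws i * wg (fa i) * wg (fb i))
  | g2 (j : Fin n) : TRel n (wg j * wg j) 1
  | ggc (i j : Fin n) : TRel n (wg i * wg j) (wg j * wg i)
  | grc {i : Fin (n - 1)} {j : Fin n} (h1 : j ≠ fa i) (h2 : j ≠ fb i) :
      TRel n (wg j * wr i) (wr i * wg j)
  | sgc {i : Fin (n - 1)} {j : Fin n} (h1 : j ≠ fa i) (h2 : j ≠ fb i) :
      TRel n (ws i * wg j) (wg j * ws i)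

/-- The set of relators `u * v⁻¹` for the relations `u = v` of `TVB n`. -/
def trels (n : ℕ) : Set (FT n) := {x | ∃ u v : FT n, TRel n u v ∧ x = u * v⁻¹}

/-- The twisted virtual braid group on `n` strands. -/
abbrev TVB (n : ℕ) := PresentedGroup (trels n)

def sigT (n : ℕ) (i : Fin (n - 1)) : TVB n := PresentedGroup.of (TGen.sig i)
def rhoT (n : ℕ) (i : Fin (n - 1)) : TVB n := PresentedGroup.of (TGen.rho i)
def gamT (n : ℕ) (j : Fin n) : TVB n := PresentedGroup.of (TGen.gam j)

/-- The element `T_i = a·φ(σ_i) + b·φ(σ_i)⁻¹ + c·1` of the monoid algebra `k[G]`. -/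
noncomputable def Telt (n : ℕ) (k : Type*) [CommRing k] (G : Type*) [Group G] (φ : TVB n →* G)
    (a b c : k) (i : Fin (n - 1)) : MonoidAlgebra k G :=
  a • MonoidAlgebra.of k G (φ (sigT n i)) +
    b • MonoidAlgebra.of k G ((φ (sigT n i))⁻¹) + c • (1 : MonoidAlgebra k G)

end TwVB

namespace STVBProof
open SingTVB TwVB

variable {n : ℕ} {k : Type*} [CommRing k] {G : Type*} [Group G]

/-- Evaluation of free-group words in `G` via `φ`. -/
def psi (φ : TVB n →* G) : FT n →* G :=
  φ.comp (QuotientGroup.mk' (Subgroup.normalClosure (trels n)))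

lemma psi_rel (φ : TVB n →* G) {u v : FT n} (h : TRel n u v) : psi φ u = psi φ v := by
  have h1 : (QuotientGroup.mk' (Subgroup.normalClosure (trels n)) (u * v⁻¹) : TVB n) = 1 :=
    (QuotientGroup.eq_one_iff _).mpr (Subgroup.subset_normalClosure ⟨u, v, h, rfl⟩)
  rw [map_mul, map_inv, mul_inv_eq_one] at h1
  exact congrArg φ h1

/-- The element `a • x + b • x⁻¹ + c • 1` of `k[G]`. -/
noncomputable def Tel (a b c : k) (x : G) : MonoidAlgebra k G :=
  a • MonoidAlgebra.of k G x + b • MonoidAlgebra.of k G x⁻¹ + c • 1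

lemma commute_e_Tel {x y : G} (h : Commute x y) (a b c : k) :
    Commute (MonoidAlgebra.of k G x) (Tel a b c y) :=
  (((h.map (MonoidAlgebra.of k G)).smul_right a).add_right
    ((h.inv_right.map (MonoidAlgebra.of k G)).smul_right b)).add_right
    ((Commute.one_right _).smul_right c)

lemma commute_Tel_Tel {x y : G} (h : Commute x y) (a b c : k) :
    Commute (Tel a b c x) (Tel a b c y) :=
  (((commute_e_Tel h a b c).smul_left a).add_left
    ((commute_e_Tel h.inv_left a b c).smul_left b)).add_left
    ((Commute.one_left _).smul_left c)

lemma mul_Tel (u x : G) (a b c : k) :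
    MonoidAlgebra.of k G u * Tel a b c x =
      a • MonoidAlgebra.of k G (u * x) + b • MonoidAlgebra.of k G (u * x⁻¹)
        + c • MonoidAlgebra.of k G u := by
  simp [Tel, mul_add, mul_smul_comm, map_mul]

lemma Tel_mul (x u : G) (a b c : k) :
    Tel a b c x * MonoidAlgebra.of k G u =
      a • MonoidAlgebra.of k G (x * u) + b • MonoidAlgebra.of k G (x⁻¹ * u)
        + c • MonoidAlgebra.of k G u := by
  simp [Tel, add_mul, smul_mul_assoc, map_mul]

lemma mul_Tel_mul (u x v : G) (a b c : k) :
    MonoidAlgebra.of k G u * Tel a b c x * MonoidAlgebra.of k G v =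
      a • MonoidAlgebra.of k G (u * x * v) + b • MonoidAlgebra.of k G (u * x⁻¹ * v)
        + c • MonoidAlgebra.of k G (u * v) := by
  rw [mul_Tel, add_mul, add_mul, smul_mul_assoc, smul_mul_assoc, smul_mul_assoc,
    ← map_mul, ← map_mul, ← map_mul]

lemma braid_aux {x y : G} (h : x * y * x = y * x * y) : x * y * x⁻¹ = y⁻¹ * x * y :=
  mul_left_cancel (a := y)
    (by rw [show y * (x * y * x⁻¹) = y * x * y * x⁻¹ by group, ← h]; group)

lemma conj_inv_aux {r x y : G} (hr : r * r = 1) (h : r * x * r = y) :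
    r * x⁻¹ * r = y⁻¹ := by
  have hri : r⁻¹ = r := inv_eq_of_mul_eq_one_right hr
  calc r * x⁻¹ * r = r⁻¹ * x⁻¹ * r⁻¹ := by rw [hri]
    _ = (r * x * r)⁻¹ := by group
    _ = y⁻¹ := by rw [h]

lemma conj5_inv {p q x : G} (hp : p * p = 1) (hq : q * q = 1) :
    ((q * p) * x * (p * q))⁻¹ = (q * p) * x⁻¹ * (p * q) := by
  have hp' : p⁻¹ = p := inv_eq_of_mul_eq_one_right hp
  have hq' : q⁻¹ = q := inv_eq_of_mul_eq_one_right hq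
  calc ((q * p) * x * (p * q))⁻¹ = (q⁻¹ * p⁻¹) * x⁻¹ * (p⁻¹ * q⁻¹) := by group
    _ = (q * p) * x⁻¹ * (p * q) := by rw [hp', hq']

/-- The assignment of generators of `STVB n` to elements of `k[G]`. -/
noncomputable def fgen (φ : TVB n →* G) (a b c : k) : Gen n → MonoidAlgebra k G
  | Gen.sig i => MonoidAlgebra.of k G (psi φ (ws i))
  | Gen.sigb i => MonoidAlgebra.of k G ((psi φ (ws i))⁻¹)
  | Gen.rho i => MonoidAlgebra.of k G (psi φ (wr i))
  | Gen.tau i => Tel a b c (psi φ (ws i))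
  | Gen.gam j => MonoidAlgebra.of k G (psi φ (wg j))

lemma fgen_rel (φ : TVB n →* G) (a b c : k) :
    ∀ u v : FM n, Rel n u v →
      FreeMonoid.lift (fgen φ a b c) u = FreeMonoid.lift (fgen φ a b c) v := by
  have Hss : ∀ {i j}, TwVB.Far i j → psi φ (ws i) * psi φ (ws j)
      = psi φ (ws j) * psi φ (ws i) := fun h => by
    simpa [map_mul] using psi_rel φ (.ss h)
  have Hrr : ∀ {i j}, TwVB.Far i j → psi φ (wr i) * psi φ (wr j)
      = psi φ (wr j) * psi φ (wr i) := fun h => by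
    simpa [map_mul] using psi_rel φ (.rr h)
  have Hsr : ∀ {i j}, TwVB.Far i j → psi φ (ws i) * psi φ (wr j)
      = psi φ (wr j) * psi φ (ws i) := fun h => by
    simpa [map_mul] using psi_rel φ (.sr h)
  have Hsss : ∀ {i j : Fin (n-1)}, j.val = i.val + 1 →
      psi φ (ws i) * psi φ (ws j) * psi φ (ws i)
        = psi φ (ws j) * psi φ (ws i) * psi φ (ws j) := fun h => by
    simpa [map_mul] using psi_rel φ (.sss h)
  have Hrrr : ∀ {i j : Fin (n-1)}, j.val = i.val + 1 →
      psi φ (wr i) * psi φ (wr j) * psi φ (wr i)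
        = psi φ (wr j) * psi φ (wr i) * psi φ (wr j) := fun h => by
    simpa [map_mul] using psi_rel φ (.rrr h)
  have Hrsr : ∀ {i j : Fin (n-1)}, j.val = i.val + 1 →
      psi φ (wr i) * psi φ (ws j) * psi φ (wr i)
        = psi φ (wr j) * psi φ (ws i) * psi φ (wr j) := fun h => by
    simpa [map_mul] using psi_rel φ (.rsr h)
  have Hrho2 : ∀ i, psi φ (wr i) * psi φ (wr i) = 1 := fun i => by
    simpa [map_mul] using psi_rel φ (.rho2 i)
  have Hgrel : ∀ i, psi φ (wg (TwVB.fb i)) * psi φ (wr i)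
      = psi φ (wr i) * psi φ (wg (TwVB.fa i)) := fun i => by
    simpa [map_mul] using psi_rel φ (.grel i)
  have Hrsrg : ∀ i, psi φ (wr i) * psi φ (ws i) * psi φ (wr i)
      = psi φ (wg (TwVB.fb i)) * psi φ (wg (TwVB.fa i)) * psi φ (ws i)
        * psi φ (wg (TwVB.fa i)) * psi φ (wg (TwVB.fb i)) := fun i => by
    simpa [map_mul] using psi_rel φ (.rsrg i)
  have Hg2 : ∀ j, psi φ (wg j) * psi φ (wg j) = 1 := fun j => by
    simpa [map_mul] using psi_rel φ (.g2 j)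
  have Hgg : ∀ i j, psi φ (wg i) * psi φ (wg j) = psi φ (wg j) * psi φ (wg i) := fun i j => by
    simpa [map_mul] using psi_rel φ (.ggc i j)
  have Hgrc : ∀ {i : Fin (n-1)} {j : Fin n}, j ≠ TwVB.fa i → j ≠ TwVB.fb i →
      psi φ (wg j) * psi φ (wr i) = psi φ (wr i) * psi φ (wg j) := fun h1 h2 => by
    simpa [map_mul] using psi_rel φ (.grc h1 h2)
  have Hsgc : ∀ {i : Fin (n-1)} {j : Fin n}, j ≠ TwVB.fa i → j ≠ TwVB.fb i →
      psi φ (ws i) * psi φ (wg j) = psi φ (wg j) * psi φ (ws i) := fun h1 h2 => by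
    simpa [map_mul] using psi_rel φ (.sgc h1 h2)
  have faeq : ∀ i : Fin (n-1), SingTVB.fa i = TwVB.fa i := fun _ => rfl
  have fbeq : ∀ i : Fin (n-1), SingTVB.fb i = TwVB.fb i := fun _ => rfl
  intro u v h
  induction h with
  | @ss i j h =>
      simp only [Ws, map_mul, FreeMonoid.lift_eval_of, fgen]
      simp only [← map_mul (MonoidAlgebra.of k G)]
      rw [Hss h]
  | @rr i j h =>
      simp only [Wr, map_mul, FreeMonoid.lift_eval_of, fgen]
      simp only [← map_mul (MonoidAlgebra.of k G)]
      rw [Hrr h]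
  | @sr i j h =>
      simp only [Ws, Wr, map_mul, FreeMonoid.lift_eval_of, fgen]
      simp only [← map_mul (MonoidAlgebra.of k G)]
      rw [Hsr h]
  | @tt i j h =>
      simp only [Wt, map_mul, FreeMonoid.lift_eval_of, fgen]
      exact commute_Tel_Tel (Hss h) a b c
  | @st i j h =>
      simp only [Ws, Wt, map_mul, FreeMonoid.lift_eval_of, fgen]
      exact commute_e_Tel (Hss h) a b c
  | @tr i j h =>
      simp only [Wt, Wr, map_mul, FreeMonoid.lift_eval_of, fgen]
      exact (commute_e_Tel (Hsr h).symm a b c).symm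
  | @sss i j h =>
      simp only [Ws, map_mul, FreeMonoid.lift_eval_of, fgen]
      simp only [← map_mul (MonoidAlgebra.of k G)]
      rw [Hsss h]
  | @rrr i j h =>
      simp only [Wr, map_mul, FreeMonoid.lift_eval_of, fgen]
      simp only [← map_mul (MonoidAlgebra.of k G)]
      rw [Hrrr h]
  | @rsr i j h =>
      simp only [Ws, Wr, map_mul, FreeMonoid.lift_eval_of, fgen]
      simp only [← map_mul (MonoidAlgebra.of k G)]
      rw [Hrsr h]
  | @rtr i j h =>
      simp only [Wt, Wr, map_mul, FreeMonoid.lift_eval_of, fgen]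
      rw [mul_Tel_mul, mul_Tel_mul, Hrsr h, conj_inv_aux (Hrho2 i) (Hrsr h),
        Hrho2 i, Hrho2 j]
      rw [show (psi φ (wr j) * psi φ (ws i) * psi φ (wr j))⁻¹
            = psi φ (wr j) * (psi φ (ws i))⁻¹ * psi φ (wr j) from
          (conj_inv_aux (Hrho2 j) rfl).symm]
  | @sst i j h =>
      simp only [Ws, Wt, map_mul, FreeMonoid.lift_eval_of, fgen]
      rw [← map_mul (MonoidAlgebra.of k G), mul_Tel, mul_assoc (Tel a b c _),
        ← map_mul (MonoidAlgebra.of k G), Tel_mul]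
      rw [show psi φ (ws i) * psi φ (ws j) * psi φ (ws i)
            = psi φ (ws j) * (psi φ (ws i) * psi φ (ws j)) from
          (Hsss h).trans (mul_assoc _ _ _),
        show psi φ (ws i) * psi φ (ws j) * (psi φ (ws i))⁻¹
            = (psi φ (ws j))⁻¹ * (psi φ (ws i) * psi φ (ws j)) from
          (braid_aux (Hsss h)).trans (mul_assoc _ _ _)]
  | @sst' i j h =>
      simp only [Ws, Wt, map_mul, FreeMonoid.lift_eval_of, fgen]
      rw [← map_mul (MonoidAlgebra.of k G), mul_Tel, mul_assoc (Tel a b c _),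
        ← map_mul (MonoidAlgebra.of k G), Tel_mul]
      rw [show psi φ (ws j) * psi φ (ws i) * psi φ (ws j)
            = psi φ (ws i) * (psi φ (ws j) * psi φ (ws i)) from
          (Hsss h).symm.trans (mul_assoc _ _ _),
        show psi φ (ws j) * psi φ (ws i) * (psi φ (ws j))⁻¹
            = (psi φ (ws i))⁻¹ * (psi φ (ws j) * psi φ (ws i)) from
          (braid_aux (Hsss h).symm).trans (mul_assoc _ _ _)]
  | rho2 i =>
      simp only [Wr, map_mul, map_one, FreeMonoid.lift_eval_of, fgen]
      simp only [← map_mul (MonoidAlgebra.of k G)]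
      rw [Hrho2 i, map_one]
  | ssb i =>
      simp only [Ws, Wsb, map_mul, map_one, FreeMonoid.lift_eval_of, fgen]
      simp only [← map_mul (MonoidAlgebra.of k G)]
      rw [mul_inv_cancel, map_one]
  | sbs i =>
      simp only [Ws, Wsb, map_mul, map_one, FreeMonoid.lift_eval_of, fgen]
      simp only [← map_mul (MonoidAlgebra.of k G)]
      rw [inv_mul_cancel, map_one]
  | stc i =>
      simp only [Ws, Wt, map_mul, FreeMonoid.lift_eval_of, fgen]
      exact commute_e_Tel (Commute.refl (psi φ (ws i))) a b c
  | grel i =>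
      simp only [Wg, Wr, map_mul, FreeMonoid.lift_eval_of, fgen, faeq, fbeq]
      simp only [← map_mul (MonoidAlgebra.of k G)]
      rw [Hgrel i]
  | rsrg i =>
      simp only [Wg, Wr, Ws, map_mul, FreeMonoid.lift_eval_of, fgen, faeq, fbeq]
      simp only [← map_mul (MonoidAlgebra.of k G)]
      rw [Hrsrg i]
  | rtrg i =>
      simp only [Wt, Wr, Wg, map_mul, FreeMonoid.lift_eval_of, fgen, faeq, fbeq]
      rw [mul_Tel_mul,
        show (MonoidAlgebra.of k G) (psi φ (wg (TwVB.fb i)))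
            * (MonoidAlgebra.of k G) (psi φ (wg (TwVB.fa i)))
          = (MonoidAlgebra.of k G) (psi φ (wg (TwVB.fb i)) * psi φ (wg (TwVB.fa i))) from
          (map_mul _ _ _).symm,
        mul_assoc (_ * Tel a b c _),
        show (MonoidAlgebra.of k G) (psi φ (wg (TwVB.fa i)))
            * (MonoidAlgebra.of k G) (psi φ (wg (TwVB.fb i)))
          = (MonoidAlgebra.of k G) (psi φ (wg (TwVB.fa i)) * psi φ (wg (TwVB.fb i))) from
          (map_mul _ _ _).symm,
        mul_Tel_mul]
      have e1 : psi φ (wr i) * psi φ (ws i) * psi φ (wr i)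
          = (psi φ (wg (TwVB.fb i)) * psi φ (wg (TwVB.fa i))) * psi φ (ws i)
            * (psi φ (wg (TwVB.fa i)) * psi φ (wg (TwVB.fb i))) :=
        (Hrsrg i).trans (by group)
      have e2 : psi φ (wr i) * (psi φ (ws i))⁻¹ * psi φ (wr i)
          = (psi φ (wg (TwVB.fb i)) * psi φ (wg (TwVB.fa i))) * (psi φ (ws i))⁻¹
            * (psi φ (wg (TwVB.fa i)) * psi φ (wg (TwVB.fb i))) :=
        (conj_inv_aux (Hrho2 i) e1).trans (conj5_inv (Hg2 _) (Hg2 _))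
      have e3 : (psi φ (wg (TwVB.fb i)) * psi φ (wg (TwVB.fa i)))
          * (psi φ (wg (TwVB.fa i)) * psi φ (wg (TwVB.fb i))) = 1 := by
        rw [show (psi φ (wg (TwVB.fb i)) * psi φ (wg (TwVB.fa i)))
              * (psi φ (wg (TwVB.fa i)) * psi φ (wg (TwVB.fb i)))
            = psi φ (wg (TwVB.fb i)) * (psi φ (wg (TwVB.fa i)) * psi φ (wg (TwVB.fa i)))
              * psi φ (wg (TwVB.fb i)) by group, Hg2, mul_one, Hg2]
      rw [e1, e2, Hrho2 i, e3]
  | g2 j =>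
      simp only [Wg, map_mul, map_one, FreeMonoid.lift_eval_of, fgen]
      simp only [← map_mul (MonoidAlgebra.of k G)]
      rw [Hg2 j, map_one]
  | gg i j =>
      simp only [Wg, map_mul, FreeMonoid.lift_eval_of, fgen]
      simp only [← map_mul (MonoidAlgebra.of k G)]
      rw [Hgg i j]
  | @grc i j h1 h2 =>
      simp only [Wg, Wr, map_mul, FreeMonoid.lift_eval_of, fgen]
      simp only [← map_mul (MonoidAlgebra.of k G)]
      rw [Hgrc (by rw [← faeq]; exact h1) (by rw [← fbeq]; exact h2)]
  | @sgc i j h1 h2 =>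
      simp only [Ws, Wg, map_mul, FreeMonoid.lift_eval_of, fgen]
      simp only [← map_mul (MonoidAlgebra.of k G)]
      rw [Hsgc (by rw [← faeq]; exact h1) (by rw [← fbeq]; exact h2)]
  | @tgc i j h1 h2 =>
      simp only [Wt, Wg, map_mul, FreeMonoid.lift_eval_of, fgen]
      exact (commute_e_Tel
        (Hsgc (by rw [← faeq]; exact h1) (by rw [← fbeq]; exact h2)).symm a b c).symm

lemma psi_ws (φ : TVB n →* G) (i : Fin (n - 1)) : psi φ (ws i) = φ (sigT n i) := rfl
lemma psi_wr (φ : TVB n →* G) (i : Fin (n - 1)) : psi φ (wr i) = φ (rhoT n i) := rfl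
lemma psi_wg (φ : TVB n →* G) (j : Fin n) : psi φ (wg j) = φ (gamT n j) := rfl

end STVBProof

open SingTVB TwVB in
/-- any representation `φ : TVB n → G` extends to a representation
`Φ : STVB n → k[G]` of the singular twisted virtual braid monoid, with
`Φ(σᵢ) = φ(σᵢ)`, `Φ(σ̄ᵢ) = φ(σᵢ)⁻¹`, `Φ(ρᵢ) = φ(ρᵢ)`, `Φ(τᵢ) = a·φ(σᵢ) + b·φ(σᵢ)⁻¹ + c·1`
and `Φ(γⱼ) = φ(γⱼ)`. -/
theorem stvb_representation_extension (n : ℕ) (hn : 2 ≤ n)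
    (k : Type*) [CommRing k] (G : Type*) [Group G] (φ : TVB n →* G) (a b c : k) :
    ∃ Φ : STVB n →* MonoidAlgebra k G,
      (∀ i : Fin (n - 1), Φ (sigE n i) = MonoidAlgebra.of k G (φ (sigT n i))) ∧
      (∀ i : Fin (n - 1), Φ (sigbE n i) = MonoidAlgebra.of k G ((φ (sigT n i))⁻¹)) ∧
      (∀ i : Fin (n - 1), Φ (rhoE n i) = MonoidAlgebra.of k G (φ (rhoT n i))) ∧
      (∀ i : Fin (n - 1), Φ (tauE n i) =
        a • MonoidAlgebra.of k G (φ (sigT n i)) +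
          b • MonoidAlgebra.of k G ((φ (sigT n i))⁻¹) + c • (1 : MonoidAlgebra k G)) ∧
      (∀ j : Fin n, Φ (gamE n j) = MonoidAlgebra.of k G (φ (gamT n j))) := by
  refine ⟨PresentedMonoid.lift (STVBProof.fgen φ a b c) (STVBProof.fgen_rel φ a b c),
    fun i => ?_, fun i => ?_, fun i => ?_, fun i => ?_, fun j => ?_⟩
  · exact congrArg (MonoidAlgebra.of k G) (STVBProof.psi_ws φ i)
  · exact congrArg (fun g => MonoidAlgebra.of k G g⁻¹) (STVBProof.psi_ws φ i)
  · exact congrArg (MonoidAlgebra.of k G) (STVBProof.psi_wr φ i)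
  · show STVBProof.Tel a b c (STVBProof.psi φ (ws i)) = _
    rw [STVBProof.psi_ws φ i]; rfl
  · exact congrArg (MonoidAlgebra.of k G) (STVBProof.psi_wg φ j)
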